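/- Let k ≥ 3 and let λ_1 < λ_2 < ⋯ < λ_k be real numbers; take indices cyclically modulo k and write d_i = λ_{i+1} − λ_i and s_i = λ_{i+1} + λ_i. Set S₁ = Σ_{i=1}^k 1/d_i, S₂ = Σ_{i=1}^k s_i/d_i, and S₃ = Σ_{i=1}^k s_i²/d_i. Then S₁ > 0, S₃ > 0, and S₂² < S₁·S₃; consequently the quantity S₂/√(S₁·S₃) lies in the open interval (−1, 1). -/

import Mathlib

open Finset

set_option maxHeartbeats 2000000 in
lemma keyQ (k : ℕ) (hk : 3 ≤ k) (lam : Fin k → ℝ) (hmono : StrictMono lam)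
    (d s : Fin k → ℝ)
    (hd : ∀ i, d i = lam (i + ⟨1, (by omega : 0 + 1 < k)⟩) - lam i)
    (hs : ∀ i, s i = lam (i + ⟨1, (by omega : 0 + 1 < k)⟩) + lam i)
    (x y : ℝ) (hxy : x ≠ 0 ∨ y ≠ 0) :
    0 < ∑ i : Fin k, (x + s i * y) ^ 2 / d i := by
  have hk0 : 0 < k := by omega
  set o : Fin k := ⟨1, by omega⟩ with ho
  have hval : ∀ i : Fin k, ((i + o : Fin k) : ℕ) = (i.1 + 1) % k := fun i => rfl
  have hs01 : s ⟨0, hk0⟩ < s ⟨1, by omega⟩ := by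
    have e0 : ((⟨0, hk0⟩ : Fin k) + o : Fin k) = ⟨1, by omega⟩ := by
      apply Fin.ext; show (0 + 1) % k = 1; rw [Nat.mod_eq_of_lt (by omega)]
    have e1 : ((⟨1, by omega⟩ : Fin k) + o : Fin k) = ⟨2, by omega⟩ := by
      apply Fin.ext; show (1 + 1) % k = 2; rw [Nat.mod_eq_of_lt (by omega)]
    rw [hs ⟨0, hk0⟩, hs ⟨1, by omega⟩, e0, e1]
    have l01 : lam ⟨0, hk0⟩ < lam ⟨1, by omega⟩ :=
      hmono (by rw [Fin.lt_def]; show (0:ℕ) < 1; omega)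
    have l12 : lam ⟨1, by omega⟩ < lam ⟨2, by omega⟩ :=
      hmono (by rw [Fin.lt_def]; show (1:ℕ) < 2; omega)
    linarith
  set L : Fin k := ⟨k - 1, by omega⟩ with hL
  have hLo : (L + o : Fin k) = ⟨0, hk0⟩ := by
    apply Fin.ext
    show (k - 1 + 1) % k = 0
    have h1 : k - 1 + 1 = k := by omega
    rw [h1, Nat.mod_self]
  -- d positive off L
  have hdpos : ∀ i : Fin k, i ≠ L → 0 < d i := by
    intro i hi
    have hi1 : i.1 < k - 1 := by
      rcases Nat.lt_or_ge i.1 (k - 1) with h | h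
      · exact h
      · exact absurd (Fin.ext (show i.1 = k - 1 by have := i.2; omega)) hi
    have hv : ((i + o : Fin k) : ℕ) = i.1 + 1 := by
      rw [hval]; exact Nat.mod_eq_of_lt (by omega)
    have hlt : i < i + o := by rw [Fin.lt_def, hv]; omega
    rw [hd i]; linarith [hmono hlt]
  have hLlt : (⟨0, hk0⟩ : Fin k) < L := by
    rw [Fin.lt_def]; show 0 < k - 1; omega
  set D : ℝ := lam L - lam ⟨0, hk0⟩ with hD
  have hDpos : 0 < D := sub_pos.2 (hmono hLlt)
  have hdL : d L = -D := by rw [hd L, hLo, hD]; ring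
  -- cyclic sums vanish
  have hshift : ∀ f : Fin k → ℝ, ∑ i : Fin k, f (i + o) = ∑ i : Fin k, f i := by
    haveI : NeZero k := ⟨by omega⟩
    exact fun f => Fintype.sum_equiv (Equiv.addRight o) _ _ (fun i => rfl)
  set t : Fin k → ℝ := fun i => x + s i * y with ht
  have hsum_td : ∑ i : Fin k, t i * d i = 0 := by
    have h1 : ∀ i : Fin k, t i * d i =
        (lam (i + o) ^ 2 * y + lam (i + o) * x) - (lam i ^ 2 * y + lam i * x) := by
      intro i; rw [ht]; simp only [hd i, hs i]; ring
    rw [Finset.sum_congr rfl (fun i _ => h1 i), Finset.sum_sub_distrib,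
      hshift (fun j => lam j ^ 2 * y + lam j * x), sub_self]
  have hsum_d : ∑ i : Fin k, d i = 0 := by
    rw [Finset.sum_congr rfl (fun i (_ : i ∈ Finset.univ) => hd i), Finset.sum_sub_distrib,
      hshift lam, sub_self]
  set E : Finset (Fin k) := Finset.univ.erase L with hE
  have hmemE : ∀ i : Fin k, i ∈ E ↔ i ≠ L := by intro i; simp [hE]
  have hdposE : ∀ i ∈ E, 0 < d i := fun i hi => hdpos i ((hmemE i).1 hi)
  have hsplit : ∀ f : Fin k → ℝ, ∑ i ∈ E, f i + f L = ∑ i : Fin k, f i :=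
    fun f => Finset.sum_erase_add _ _ (Finset.mem_univ L)
  have hsum_dE : ∑ i ∈ E, d i = D := by
    have h := hsplit d; rw [hsum_d, hdL] at h; linarith
  have hsum_tdE : ∑ i ∈ E, t i * d i = t L * D := by
    have h := hsplit (fun i => t i * d i)
    rw [hsum_td] at h
    have hbeta : ∑ i ∈ E, t i * d i + t L * d L = 0 := h
    rw [hdL] at hbeta; linear_combination hbeta
  -- two distinct indices in E
  have h0L : (⟨0, hk0⟩ : Fin k) ≠ L := Fin.ne_of_val_ne (show (0:ℕ) ≠ k - 1 by omega)
  have h1L : (⟨1, by omega⟩ : Fin k) ≠ L := Fin.ne_of_val_ne (show (1:ℕ) ≠ k - 1 by omega)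
  have h01 : (⟨0, hk0⟩ : Fin k) ≠ ⟨1, by omega⟩ := Fin.ne_of_val_ne (show (0:ℕ) ≠ 1 by omega)
  have h0E : (⟨0, hk0⟩ : Fin k) ∈ E := (hmemE _).2 h0L
  have h1E : (⟨1, by omega⟩ : Fin k) ∈ E := (hmemE _).2 h1L
  -- A > 0
  set A : ℝ := ∑ i ∈ E, t i ^ 2 / d i with hA
  have hAnn : ∀ i ∈ E, 0 ≤ t i ^ 2 / d i := fun i hi =>
    div_nonneg (sq_nonneg _) (le_of_lt (hdposE i hi))
  have hA0 : 0 ≤ A := Finset.sum_nonneg hAnn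
  have hApos : 0 < A := by
    rcases lt_or_eq_of_le hA0 with h | h
    · exact h
    exfalso
    have hz := (Finset.sum_eq_zero_iff_of_nonneg hAnn).1 h.symm
    have htz : ∀ i ∈ E, t i = 0 := by
      intro i hi
      have hq : t i ^ 2 = 0 :=
        (div_eq_zero_iff.1 (hz i hi)).resolve_right (ne_of_gt (hdposE i hi))
      exact pow_eq_zero_iff (n := 2) (by norm_num) |>.1 hq
    have ht0 : x + s ⟨0, hk0⟩ * y = 0 := htz _ h0E
    have ht1 : x + s ⟨1, by omega⟩ * y = 0 := htz _ h1E
    have hsy : s ⟨1, by omega⟩ * y = s ⟨0, hk0⟩ * y := by linarith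
    have h2 : (s ⟨1, by omega⟩ - s ⟨0, hk0⟩) * y = 0 := by rw [sub_mul]; linarith
    rcases mul_eq_zero.1 h2 with h3 | h3
    · have := sub_eq_zero.1 h3; linarith
    · have hx : x = 0 := by rw [h3] at ht0; linarith
      rcases hxy with h4 | h4
      · exact h4 hx
      · exact h4 h3
  -- Cauchy-Schwarz
  have hCS : (t L * D) ^ 2 ≤ A * ∑ i ∈ E, d i ^ 3 := by
    rw [← hsum_tdE]
    have h1 : ∀ i ∈ E, t i * d i =
        (t i / Real.sqrt (d i)) * (Real.sqrt (d i) * d i) := by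
      intro i hi
      have hsne : Real.sqrt (d i) ≠ 0 := ne_of_gt (Real.sqrt_pos.2 (hdposE i hi))
      rw [← mul_assoc, div_mul_cancel₀ _ hsne]
    have h2 : ∀ i ∈ E, (t i / Real.sqrt (d i)) ^ 2 = t i ^ 2 / d i := by
      intro i hi
      rw [div_pow, Real.sq_sqrt (hdposE i hi).le]
    have h3 : ∀ i ∈ E, (Real.sqrt (d i) * d i) ^ 2 = d i ^ 3 := by
      intro i hi
      rw [mul_pow, Real.sq_sqrt (hdposE i hi).le]; ring
    calc (∑ i ∈ E, t i * d i) ^ 2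
        = (∑ i ∈ E, (t i / Real.sqrt (d i)) * (Real.sqrt (d i) * d i)) ^ 2 := by
          rw [Finset.sum_congr rfl h1]
      _ ≤ (∑ i ∈ E, (t i / Real.sqrt (d i)) ^ 2) * ∑ i ∈ E, (Real.sqrt (d i) * d i) ^ 2 :=
          Finset.sum_mul_sq_le_sq_mul_sq E _ _
      _ = A * ∑ i ∈ E, d i ^ 3 := by
          rw [Finset.sum_congr rfl h2, Finset.sum_congr rfl h3]
  -- sum of cubes < D^3
  have hcube : ∑ i ∈ E, d i ^ 3 < D ^ 3 := by
    have hstep : ∀ i ∈ E, d i ^ 3 < d i * D ^ 2 := by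
      intro i hi
      have hdi := hdposE i hi
      obtain ⟨j, hjE, hji⟩ : ∃ j, j ∈ E ∧ j ≠ i := by
        rcases eq_or_ne i ⟨0, hk0⟩ with rfl | h
        · exact ⟨_, h1E, h01.symm⟩
        · exact ⟨_, h0E, Ne.symm h⟩
      have hlt : d i < D := by
        rw [← hsum_dE]
        exact Finset.single_lt_sum hji hi hjE (hdposE j hjE)
          (fun m hm _ => (hdposE m hm).le)
      nlinarith [mul_pos (mul_pos hdi (sub_pos.2 hlt)) (by linarith : (0:ℝ) < D + d i)]
    calc ∑ i ∈ E, d i ^ 3 < ∑ i ∈ E, d i * D ^ 2 :=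
          Finset.sum_lt_sum_of_nonempty ⟨_, h0E⟩ hstep
      _ = D ^ 3 := by rw [← Finset.sum_mul, hsum_dE]; ring
  -- combine
  have hkey : t L ^ 2 * D ^ 2 < (A * D) * D ^ 2 := by
    calc t L ^ 2 * D ^ 2 = (t L * D) ^ 2 := by ring
      _ ≤ A * ∑ i ∈ E, d i ^ 3 := hCS
      _ < A * D ^ 3 := mul_lt_mul_of_pos_left hcube hApos
      _ = (A * D) * D ^ 2 := by ring
  have hfin : t L ^ 2 / D < A := by
    rw [div_lt_iff₀ hDpos]
    exact lt_of_mul_lt_mul_right hkey (by positivity)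
  have hsplitQ := hsplit (fun i => t i ^ 2 / d i)
  have hQ : ∑ i : Fin k, (x + s i * y) ^ 2 / d i = A + t L ^ 2 / d L := by
    rw [← hsplitQ]
  rw [hQ, hdL]
  rw [div_neg]
  linarith

/-- For `k ≥ 3` and `λ_1 < ⋯ < λ_k`, with cyclic `d_i = λ_{i+1} - λ_i`,
`s_i = λ_{i+1} + λ_i`, and `S₁ = ∑ 1/d_i`, `S₂ = ∑ s_i/d_i`, `S₃ = ∑ s_i²/d_i`, one has
`S₁ > 0`, `S₃ > 0`, `S₂² < S₁·S₃`, and hence `S₂/√(S₁·S₃) ∈ (-1, 1)`. -/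
theorem cyclic_cauchy_binet_cosine_bound
    (k : ℕ) (hk : 3 ≤ k) (lam : Fin k → ℝ) (hmono : StrictMono lam)
    (d s : Fin k → ℝ)
    (hd : ∀ i, d i = lam (i + ⟨1, by omega⟩) - lam i)
    (hs : ∀ i, s i = lam (i + ⟨1, by omega⟩) + lam i)
    (S₁ S₂ S₃ : ℝ)
    (hS₁ : S₁ = ∑ i : Fin k, 1 / d i)
    (hS₂ : S₂ = ∑ i : Fin k, s i / d i)
    (hS₃ : S₃ = ∑ i : Fin k, (s i) ^ 2 / d i) :
    0 < S₁ ∧ 0 < S₃ ∧ S₂ ^ 2 < S₁ * S₃ ∧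
      -1 < S₂ / Real.sqrt (S₁ * S₃) ∧ S₂ / Real.sqrt (S₁ * S₃) < 1 := by
  have h1 : 0 < S₁ := by
    have h := keyQ k hk lam hmono d s hd hs 1 0 (Or.inl one_ne_zero)
    simp only [mul_zero, add_zero, one_pow] at h
    rwa [hS₁]
  have h3 : 0 < S₃ := by
    have h := keyQ k hk lam hmono d s hd hs 0 1 (Or.inr one_ne_zero)
    simp only [zero_add, mul_one] at h
    rwa [hS₃]
  have hlt : S₂ ^ 2 < S₁ * S₃ := by
    have h := keyQ k hk lam hmono d s hd hs S₂ (-S₁)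
      (Or.inr (neg_ne_zero.2 (ne_of_gt h1)))
    have hsum : ∑ i : Fin k, (S₂ + s i * -S₁) ^ 2 / d i
        = S₂ ^ 2 * S₁ - 2 * S₂ * S₁ * S₂ + S₁ ^ 2 * S₃ := by
      have e : ∀ i : Fin k, (S₂ + s i * -S₁) ^ 2 / d i
          = S₂ ^ 2 * (1 / d i) - (2 * S₂ * S₁) * (s i / d i) + S₁ ^ 2 * (s i ^ 2 / d i) :=
        fun i => by ring
      rw [Finset.sum_congr rfl fun i _ => e i, Finset.sum_add_distrib, Finset.sum_sub_distrib,
        ← Finset.mul_sum, ← Finset.mul_sum, ← Finset.mul_sum, ← hS₁, ← hS₂, ← hS₃]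
    rw [hsum] at h
    have h' : S₁ * S₂ ^ 2 < S₁ * (S₁ * S₃) := by nlinarith
    exact lt_of_mul_lt_mul_left h' h1.le
  have hpos : 0 < S₁ * S₃ := lt_of_le_of_lt (sq_nonneg S₂) hlt
  have hrpos : 0 < Real.sqrt (S₁ * S₃) := Real.sqrt_pos.2 hpos
  have habs : |S₂| < Real.sqrt (S₁ * S₃) := by
    rw [← Real.sqrt_sq_eq_abs]
    exact Real.sqrt_lt_sqrt (sq_nonneg _) hlt
  have habs' := abs_lt.1 habs
  refine ⟨h1, h3, hlt, ?_, ?_⟩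
  · rw [lt_div_iff₀ hrpos]; linarith [habs'.1]
  · rw [div_lt_one hrpos]; exact habs'.2
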